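/- If the k-step information transfer from state z_i to state z_j of the linear system z(t+1) = A z(t) + ξ(t) is non-zero for some k ≥ 1, then there is a directed path from node z_i to node z_j in the directed graph associated with A. -/
import Mathlib


open Matrix

/-- The trajectory of the linear stochastic system `z(k+1) = A z(k) + ξ(k)`. -/
noncomputable def traj {ι : Type*} [Fintype ι] (A : Matrix ι ι ℝ)
    (z0 : ι → ℝ) (ξ : ℕ → ι → ℝ) : ℕ → ι → ℝ
  | 0 => z0
  | (k + 1) => A *ᵥ (traj A z0 ξ k) + ξ k

lemma traj_frozen_eq {N : ℕ} (A : Matrix (Fin N) (Fin N) ℝ) (i : Fin N)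
    (z0 : Fin N → ℝ) (ξ : ℕ → Fin N → ℝ) :
    ∀ k, ∀ q : Fin N, ∀ hq : q ≠ i,
      ¬ Relation.TransGen (fun p q => A q p ≠ 0) i q →
      traj A z0 ξ k q =
        traj (A.submatrix (Subtype.val : {l : Fin N // l ≠ i} → Fin N) Subtype.val)
          (fun l => z0 l) (fun t l => ξ t l) k ⟨q, hq⟩ := by
  intro k
  induction k with
  | zero => intro q hq _; rfl
  | succ k ih =>
    intro q hq hpath
    have hAqi : A q i = 0 := by
      by_contra h
      exact hpath (Relation.TransGen.single h)
    show (A *ᵥ traj A z0 ξ k) q + ξ k q = _ + ξ k q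
    congr 1
    simp only [mulVec, dotProduct]
    have h1 : ∑ p : Fin N, A q p * traj A z0 ξ k p
        = ∑ p ∈ Finset.univ.erase i, A q p * traj A z0 ξ k p := by
      rw [Finset.sum_erase Finset.univ (by simp [hAqi])]
    rw [h1, Finset.sum_subtype (p := fun l => l ≠ i) (Finset.univ.erase i)
      (fun x => by simp) (fun p => A q p * traj A z0 ξ k p)]
    apply Finset.sum_congr rfl
    intro p _
    by_cases hz : A q p.val = 0
    · simp [hz, Matrix.submatrix_apply]
    · have hpp : ¬ Relation.TransGen (fun p q => A q p ≠ 0) i p.val :=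
        fun h => hpath (h.tail hz)
      rw [ih p.val p.property hpp]
      rfl

/-- If the `k`-step information transfer from state `z_i` to state `z_j` of
the system `z(t+1) = A z(t) + ξ(t)` is non-zero for some `k ≥ 1`, then there
is a directed path from node `i` to node `j` in the directed graph of `A`
(edge `p → q` iff `A q p ≠ 0`).  The `k`-step transfer is the difference
`H(z_j(k)|z_j(k-1),…,z_j(0)) − H_{i̸}(z_j(k)|z_j(k-1),…,z_j(0))`, where the
frozen system evolves by the principal submatrix of `A` deleting row and
column `i`; it is expressed here via an (arbitrary) entropy functional
`Hent k` of the random trajectory `(z_j(0),…,z_j(k))`, viewed as a function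
of the initial condition and the noise. -/
theorem path_of_information_transfer_ne_zero {N : ℕ}
    (A : Matrix (Fin N) (Fin N) ℝ) (i j : Fin N) (hij : j ≠ i)
    (Hent : (k : ℕ) → (((Fin N → ℝ) → (ℕ → Fin N → ℝ) → Fin (k + 1) → ℝ)) → ℝ)
    (htransfer : ∃ k : ℕ, 1 ≤ k ∧
      Hent k (fun z0 ξ l => traj A z0 ξ l j)
        - Hent k (fun z0 ξ l =>
            traj (A.submatrix (Subtype.val : {l : Fin N // l ≠ i} → Fin N) Subtype.val)
              (fun l => z0 l) (fun t l => ξ t l) l ⟨j, hij⟩) ≠ 0) :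
    Relation.TransGen (fun p q => A q p ≠ 0) i j := by
  by_contra hpath
  obtain ⟨k, -, hne⟩ := htransfer
  apply hne
  have heq : (fun z0 ξ (l : Fin (k+1)) => traj A z0 ξ l j)
      = (fun z0 ξ (l : Fin (k+1)) =>
          traj (A.submatrix (Subtype.val : {l : Fin N // l ≠ i} → Fin N) Subtype.val)
            (fun l => z0 l) (fun t l => ξ t l) l ⟨j, hij⟩) := by
    funext z0 ξ l
    exact traj_frozen_eq A i z0 ξ l j hij hpath
  rw [heq, sub_self]
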